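/- Let x be an element of the Jacobson radical of a Noetherian ring R and M a finitely generated R-module. If for all n ≥ 0 one has ((x^{n+1})M :_M x^n) = xM, then x is a nonzerodivisor on M. -/
import Mathlib

/-- Let `x` be an element of the Jacobson radical of a Noetherian ring `R` and
`M` a finitely generated `R`-module. If for all `n ≥ 0` one has
`((x^{n+1})M :_M x^n) = xM`, then `x` is a nonzerodivisor on `M`. -/
theorem isSMulRegular_of_colon_eq {R : Type*} [CommRing R] [IsNoetherianRing R]
    {M : Type*} [AddCommGroup M] [Module R M] [Module.Finite R M]
    (x : R) (hx : x ∈ Ideal.jacobson (⊥ : Ideal R))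
    (h : ∀ n : ℕ, Submodule.comap (LinearMap.lsmul R M (x ^ n))
        (Ideal.span {x ^ (n + 1)} • (⊤ : Submodule R M))
      = Ideal.span {x} • (⊤ : Submodule R M)) :
    IsSMulRegular M x := by
  have hNoeth : IsNoetherian R M := inferInstance
  -- the chain of kernels of multiplication by `x ^ n`
  set f : ℕ →o Submodule R M :=
    ⟨fun n => LinearMap.ker (LinearMap.lsmul R M (x ^ n)), by
      intro i j hij
      intro m hm
      simp only [LinearMap.mem_ker, LinearMap.lsmul_apply] at hm ⊢
      obtain ⟨k, rfl⟩ := Nat.exists_eq_add_of_le hij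
      rw [pow_add, mul_comm, mul_smul, hm, smul_zero]⟩ with hf
  obtain ⟨n₀, hn₀⟩ := monotone_stabilizes_iff_noetherian.mpr hNoeth f
  set K : Submodule R M := f n₀ with hK
  -- `K ≤ span{x} • K`
  have hle : K ≤ Ideal.span {x} • K := by
    intro m hm
    have hm0 : x ^ n₀ • m = 0 := hm
    have hmem : m ∈ Submodule.comap (LinearMap.lsmul R M (x ^ n₀))
        (Ideal.span {x ^ (n₀ + 1)} • (⊤ : Submodule R M)) := by
      simp only [Submodule.mem_comap, LinearMap.lsmul_apply, hm0]
      exact Submodule.zero_mem _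
    rw [h n₀, Submodule.ideal_span_singleton_smul, ← SetLike.mem_coe,
      Submodule.coe_pointwise_smul] at hmem
    obtain ⟨m', -, rfl⟩ := hmem
    have hm' : m' ∈ K := by
      have : m' ∈ f (n₀ + 1) := by
        show x ^ (n₀ + 1) • m' = 0
        rw [pow_succ, mul_smul]
        exact hm0
      rw [← hn₀ (n₀ + 1) (Nat.le_succ _)] at this
      exact this
    exact Submodule.smul_mem_smul (Ideal.mem_span_singleton_self x) hm'
  -- Nakayama: `K = ⊥`
  have hKbot : K = ⊥ :=
    Submodule.eq_bot_of_le_smul_of_le_jacobson_bot (Ideal.span {x}) K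
      (IsNoetherian.noetherian K)
      hle
      (by rw [Ideal.span_le]; simpa using hx)
  -- conclude
  intro a b hab
  have hab' : x • (a - b) = 0 := by
    have : x • a = x • b := hab
    rw [smul_sub, this, sub_self]
  have h1 : a - b ∈ f 1 := by
    show x ^ 1 • (a - b) = 0
    rwa [pow_one]
  have h2 : a - b ∈ f (n₀ + 1) := f.monotone (Nat.le_add_left 1 n₀) h1
  rw [← hn₀ (n₀ + 1) (Nat.le_succ _), hKbot] at h2
  exact sub_eq_zero.mp h2
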